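/- A set φ of UTVPI constraints is unsatisfiable in ℚ (i.e., no assignment v : X → ℚ satisfies a·v(x) + b·v(y) ≤ d for all constraints a·x + b·y ≤ d in φ) if and only if its constraint graph G_φ contains a negative weight cycle. -/
import Mathlib


namespace UTVPIPaper

/-- A linear integer constraint `f ≤ bound`, where `f` is a finitely supported
integer linear form over the variables `X`. -/
structure UC (X : Type*) where
  f : X →₀ ℤ
  bound : ℤ

variable {X : Type*}

/-- `c` is a UTVPI constraint, i.e. of the form `a·x + b·y ≤ d` with `a, b ∈ {-1, 0, 1}`. -/
def UC.IsUTVPI (c : UC X) : Prop :=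
  ∃ (a b : ℤ) (x y : X), (a = -1 ∨ a = 0 ∨ a = 1) ∧ (b = -1 ∨ b = 0 ∨ b = 1) ∧
    c.f = Finsupp.single x a + Finsupp.single y b

/-- The constraint `c` holds under the integer assignment `v`. -/
def UC.holds (v : X → ℤ) (c : UC X) : Prop :=
  (c.f.sum fun x a => a * v x) ≤ c.bound

/-- The assignment `v` satisfies all constraints of `φ`. -/
def Sat (v : X → ℤ) (φ : Set (UC X)) : Prop := ∀ c ∈ φ, c.holds v

/-- `φ` is satisfiable in ℤ. -/
def SatZ (φ : Set (UC X)) : Prop := ∃ v : X → ℤ, Sat v φ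

/-- The constraint `c` holds under the rational assignment `v`. -/
def UC.holdsQ (v : X → ℚ) (c : UC X) : Prop :=
  (c.f.sum fun x a => (a : ℚ) * v x) ≤ (c.bound : ℚ)

/-- `φ` is satisfiable in ℚ. -/
def SatQ (φ : Set (UC X)) : Prop := ∃ v : X → ℚ, ∀ c ∈ φ, c.holdsQ v

/-- The transitive closure `TC(φ)`: the smallest set containing `φ` closed under
the rule: `a·x - c·y ≤ d₁` and `c·y + b·z ≤ d₂` imply `a·x + b·z ≤ d₁ + d₂`,
for `a, b ∈ {-1,0,1}` and `c ∈ {-1,1}`. -/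
inductive TC (φ : Set (UC X)) : UC X → Prop
  | base {c : UC X} : c ∈ φ → TC φ c
  | trans {a b c : ℤ} {x y z : X} {d₁ d₂ : ℤ} :
      (a = -1 ∨ a = 0 ∨ a = 1) → (b = -1 ∨ b = 0 ∨ b = 1) → (c = -1 ∨ c = 1) →
      TC φ ⟨Finsupp.single x a - Finsupp.single y c, d₁⟩ →
      TC φ ⟨Finsupp.single y c + Finsupp.single z b, d₂⟩ →
      TC φ ⟨Finsupp.single x a + Finsupp.single z b, d₁ + d₂⟩

/-- The tightened closure `TI(φ)`: the smallest set containing `φ` closed under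
the rule: `a·x + a·x ≤ d` implies `a·x ≤ ⌊d/2⌋`, for `a ∈ {-1,1}`. -/
inductive TI (φ : Set (UC X)) : UC X → Prop
  | base {c : UC X} : c ∈ φ → TI φ c
  | tighten {a : ℤ} {x : X} {d : ℤ} :
      (a = -1 ∨ a = 1) →
      TI φ ⟨Finsupp.single x a + Finsupp.single x a, d⟩ →
      TI φ ⟨Finsupp.single x a, Int.fdiv d 2⟩

/-- The tightened transitive closure `TTC(φ)`: the smallest set containing `φ`
closed under both the transitivity and the tightening rules. -/
inductive TTC (φ : Set (UC X)) : UC X → Prop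
  | base {c : UC X} : c ∈ φ → TTC φ c
  | trans {a b c : ℤ} {x y z : X} {d₁ d₂ : ℤ} :
      (a = -1 ∨ a = 0 ∨ a = 1) → (b = -1 ∨ b = 0 ∨ b = 1) → (c = -1 ∨ c = 1) →
      TTC φ ⟨Finsupp.single x a - Finsupp.single y c, d₁⟩ →
      TTC φ ⟨Finsupp.single y c + Finsupp.single z b, d₂⟩ →
      TTC φ ⟨Finsupp.single x a + Finsupp.single z b, d₁ + d₂⟩
  | tighten {a : ℤ} {x : X} {d : ℤ} :
      (a = -1 ∨ a = 1) →
      TTC φ ⟨Finsupp.single x a + Finsupp.single x a, d⟩ →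
      TTC φ ⟨Finsupp.single x a, Int.fdiv d 2⟩

/-- Vertices of the constraint graph: `(true, x)` is `x⁺` and `(false, x)` is `x⁻`. -/
abbrev Vtx (X : Type*) := Bool × X

/-- The counterpart `-u` of a vertex `u`. -/
def vneg (u : Vtx X) : Vtx X := (!u.1, u.2)

/-- The set of edges `E(c)` associated with a UTVPI constraint `c`
(the transformation table):
`x - y ≤ d` gives `(y⁺, x⁺, d)` and `(x⁻, y⁻, d)`;
`x + y ≤ d` gives `(y⁻, x⁺, d)` and `(x⁻, y⁺, d)`;
`-x - y ≤ d` gives `(y⁺, x⁻, d)` and `(x⁺, y⁻, d)`;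
`x ≤ d` gives `(x⁻, x⁺, 2d)`; `-x ≤ d` gives `(x⁺, x⁻, 2d)`. -/
def cedges (c : UC X) : Set (Vtx X × Vtx X × ℤ) :=
  { e | ∃ (x y : X) (d : ℤ),
      (c = ⟨Finsupp.single x 1 - Finsupp.single y 1, d⟩ ∧
        (e = ((true, y), (true, x), d) ∨ e = ((false, x), (false, y), d))) ∨
      (c = ⟨Finsupp.single x 1 + Finsupp.single y 1, d⟩ ∧
        (e = ((false, y), (true, x), d) ∨ e = ((false, x), (true, y), d))) ∨
      (c = ⟨-Finsupp.single x 1 - Finsupp.single y 1, d⟩ ∧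
        (e = ((true, y), (false, x), d) ∨ e = ((true, x), (false, y), d))) ∨
      (c = ⟨Finsupp.single x 1, d⟩ ∧ e = ((false, x), (true, x), 2 * d)) ∨
      (c = ⟨-Finsupp.single x 1, d⟩ ∧ e = ((true, x), (false, x), 2 * d)) }

/-- The constraint graph `G_φ` of a set `φ` of UTVPI constraints. -/
def Gr (φ : Set (UC X)) : Set (Vtx X × Vtx X × ℤ) := { e | ∃ c ∈ φ, e ∈ cedges c }

/-- `IsPath E u p v`: `p` is a path (a sequence of consecutive weighted edges,
each belonging to the edge set `E`) from vertex `u` to vertex `v`. -/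
inductive IsPath {V : Type*} (E : Set (V × V × ℤ)) : V → List (V × V × ℤ) → V → Prop
  | nil (v : V) : IsPath E v [] v
  | cons {u v w : V} {d : ℤ} {p : List (V × V × ℤ)} :
      (u, v, d) ∈ E → IsPath E v p w → IsPath E u ((u, v, d) :: p) w

/-- The weight of a path: the sum of the weights of its edges. -/
def pweight {V : Type*} (p : List (V × V × ℤ)) : ℤ := (p.map fun e => e.2.2).sum

/-- The graph `E` has no negative weight cycle. -/
def NoNegCycle {V : Type*} (E : Set (V × V × ℤ)) : Prop :=
  ∀ (v : V) (p : List (V × V × ℤ)), IsPath E v p v → 0 ≤ pweight p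

/-- `wSP E u v` is the minimum weight of a path from `u` to `v` in `E`
(`⊤` if no path exists). -/
noncomputable def wSP {V : Type*} (E : Set (V × V × ℤ)) (u v : V) : WithTop ℤ :=
  sInf {w : WithTop ℤ | ∃ p, IsPath E u p v ∧ (pweight p : WithTop ℤ) = w}

/-- The bounds function `ρ(u) = ⌊wSP(u, -u) / 2⌋` (`⊤` if there is no path from `u` to `-u`). -/
noncomputable def rho (φ : Set (UC X)) (u : Vtx X) : WithTop ℤ :=
  (wSP (Gr φ) u (vneg u)).map fun w => Int.fdiv w 2

section PathLemmas

variable {V : Type*} {E : Set (V × V × ℤ)}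

lemma pweight_cons (e : V × V × ℤ) (p : List (V × V × ℤ)) :
    pweight (e :: p) = e.2.2 + pweight p := by simp [pweight]

lemma pweight_append (p q : List (V × V × ℤ)) :
    pweight (p ++ q) = pweight p + pweight q := by simp [pweight]

lemma IsPath.append {u v w : V} {p q : List (V × V × ℤ)}
    (h1 : IsPath E u p v) (h2 : IsPath E v q w) : IsPath E u (p ++ q) w := by
  induction h1 with
  | nil => simpa using h2
  | cons he _ ih => exact .cons he (ih h2)

lemma IsPath.split {u w : V} {p q : List (V × V × ℤ)}
    (h : IsPath E u (p ++ q) w) : ∃ v, IsPath E u p v ∧ IsPath E v q w := by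
  induction p generalizing u with
  | nil => exact ⟨u, .nil u, h⟩
  | cons e p ih =>
    obtain ⟨a, b, d⟩ := e
    rw [List.cons_append] at h
    cases h with
    | cons he h' =>
      obtain ⟨v, h1, h2⟩ := ih h'
      exact ⟨v, .cons he h1, h2⟩

lemma IsPath.edges_mem {u v : V} {p : List (V × V × ℤ)}
    (h : IsPath E u p v) : ∀ e ∈ p, e ∈ E := by
  induction h with
  | nil => simp
  | cons he _ ih =>
    intro e hm
    rcases List.mem_cons.1 hm with rfl | hm
    · exact he
    · exact ih e hm

lemma IsPath.mono {E' : Set (V × V × ℤ)} (hEE : E ⊆ E') {u v : V}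
    {p : List (V × V × ℤ)} (h : IsPath E u p v) : IsPath E' u p v := by
  induction h with
  | nil => exact .nil _
  | cons he _ ih => exact .cons (hEE he) ih

lemma exists_dup_split {α β : Type*} (f : α → β) :
    ∀ (l : List α), ¬ (l.map f).Nodup →
      ∃ (A B C : List α) (a b : α), l = A ++ a :: (B ++ b :: C) ∧ f a = f b := by
  intro l
  induction l with
  | nil => simp
  | cons x xs ih =>
    intro h
    rw [List.map_cons, List.nodup_cons] at h
    by_cases hx : f x ∈ xs.map f
    · obtain ⟨b, hb, hfb⟩ := List.mem_map.1 hx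
      obtain ⟨B, C, rfl⟩ := List.append_of_mem hb
      exact ⟨[], B, C, x, b, by simp, hfb.symm⟩
    · have hxs : ¬ (xs.map f).Nodup := fun hn => h ⟨hx, hn⟩
      obtain ⟨A, B, C, a, b, rfl, hab⟩ := ih hxs
      exact ⟨x :: A, B, C, a, b, by simp, hab⟩

lemma not_nodup_of_card_lt {α β : Type*} [DecidableEq β] (f : α → β) (l : List α)
    (S : Finset β) (hsub : ∀ a ∈ l, f a ∈ S) (hlen : S.card < l.length) :
    ¬ (l.map f).Nodup := by
  intro hnd
  have h1 : (l.map f).toFinset ⊆ S := by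
    intro b hb
    rw [List.mem_toFinset, List.mem_map] at hb
    obtain ⟨a, ha, rfl⟩ := hb
    exact hsub a ha
  have h2 := Finset.card_le_card h1
  rw [List.toFinset_card_of_nodup hnd, List.length_map] at h2
  omega

lemma IsPath.cons_inv {u v w : V} {d : ℤ} {s : V} {p : List (V × V × ℤ)}
    (h : IsPath E s ((u, v, d) :: p) w) : s = u ∧ (u, v, d) ∈ E ∧ IsPath E v p w := by
  cases h with
  | cons he h' => exact ⟨rfl, he, h'⟩

lemma shorten [DecidableEq V] (hnc : NoNegCycle E) (S : Finset V)
    (hsrc : ∀ e ∈ E, e.1 ∈ S) :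
    ∀ (n : ℕ) (p : List (V × V × ℤ)) (u v : V), p.length ≤ n → IsPath E u p v →
      ∃ q, IsPath E u q v ∧ q.length ≤ S.card ∧ pweight q ≤ pweight p := by
  intro n
  induction n with
  | zero =>
    intro p u v hl hp
    exact ⟨p, hp, by omega, le_rfl⟩
  | succ n ih =>
    intro p u v hl hp
    by_cases hle : p.length ≤ S.card
    · exact ⟨p, hp, hle, le_rfl⟩
    · have hnd : ¬ (p.map (·.1)).Nodup :=
        not_nodup_of_card_lt _ p S (fun e he => hsrc e (hp.edges_mem e he)) (by omega)
      obtain ⟨A, B, C, a, b, rfl, hab⟩ := exists_dup_split (·.1) p hnd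
      obtain ⟨t, hA, hrest⟩ := hp.split
      obtain ⟨a1, a2, ad⟩ := a
      obtain ⟨heq1, hae, hrest'⟩ := hrest.cons_inv
      obtain ⟨t2, hB, hbC⟩ := hrest'.split
      obtain ⟨b1, b2, bd⟩ := b
      obtain ⟨heq2, hbe, hC⟩ := hbC.cons_inv
      have hab' : a1 = b1 := hab
      rw [heq1] at hA
      rw [heq2, ← hab'] at hB
      have hcyc : IsPath E a1 ((a1, a2, ad) :: B) a1 := .cons hae hB
      have h0 : 0 ≤ pweight ((a1, a2, ad) :: B) := hnc _ _ hcyc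
      rw [← hab'] at hbe
      have htl : IsPath E a1 ((a1, b2, bd) :: C) v := .cons hbe hC
      have hq : IsPath E u (A ++ (a1, b2, bd) :: C) v := hA.append htl
      obtain ⟨q, hqp, hqlen, hqw⟩ := ih (A ++ (a1, b2, bd) :: C) u v
        (by simp only [List.length_append, List.length_cons] at hl ⊢; omega) hq
      refine ⟨q, hqp, hqlen, le_trans hqw ?_⟩
      simp only [pweight_append, pweight_cons] at h0 ⊢
      linarith

lemma pweight_ge {C : ℤ} (hC : ∀ e ∈ E, -C ≤ e.2.2) :
    ∀ (p : List (V × V × ℤ)) (u v : V), IsPath E u p v →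
      -((p.length : ℤ) * C) ≤ pweight p := by
  intro p u v hp
  induction hp with
  | nil => simp [pweight]
  | cons he hp ih =>
    have h1 := hC _ he
    simp only [pweight_cons, List.length_cons] at *
    push_cast
    push_cast at ih
    linarith

lemma exists_potential (E : Set (V × V × ℤ)) (hfin : E.Finite) (hnc : NoNegCycle E) :
    ∃ π : V → ℤ, ∀ e ∈ E, π e.2.1 ≤ π e.1 + e.2.2 := by
  classical
  set S : Finset V := hfin.toFinset.image (·.1) with hSdef
  have hsrc : ∀ e ∈ E, e.1 ∈ S := fun e he =>
    Finset.mem_image.2 ⟨e, hfin.mem_toFinset.2 he, rfl⟩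
  set C : ℤ := ∑ e ∈ hfin.toFinset, |e.2.2| with hCdef
  have hC0 : 0 ≤ C := Finset.sum_nonneg fun _ _ => abs_nonneg _
  have hCe : ∀ e ∈ E, -C ≤ e.2.2 := by
    intro e he
    have h1 : |e.2.2| ≤ C :=
      Finset.single_le_sum (f := fun e : V × V × ℤ => |e.2.2|)
        (fun _ _ => abs_nonneg _) (hfin.mem_toFinset.2 he)
    linarith [neg_abs_le e.2.2]
  have hne : ∀ v : V, ({w | ∃ u p, IsPath E u p v ∧ p.length ≤ S.card ∧ pweight p = w} : Set ℤ).Nonempty :=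
    fun v => ⟨0, v, [], .nil v, by simp, rfl⟩
  have hbdd : ∀ v : V, BddBelow ({w | ∃ u p, IsPath E u p v ∧ p.length ≤ S.card ∧ pweight p = w} : Set ℤ) := by
    intro v
    refine ⟨-((S.card : ℤ) * C), ?_⟩
    rintro w ⟨u, p, hp, hlen, rfl⟩
    have h1 := pweight_ge hCe p u v hp
    have h2 : (p.length : ℤ) ≤ (S.card : ℤ) := by exact_mod_cast hlen
    nlinarith [mul_nonneg (sub_nonneg.2 h2) hC0]
  refine ⟨fun v => sInf {w | ∃ u p, IsPath E u p v ∧ p.length ≤ S.card ∧ pweight p = w}, ?_⟩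
  rintro ⟨eu, ev, ed⟩ he
  obtain ⟨u0, p, hp, hlen, hw⟩ := Int.csInf_mem (hne eu) (hbdd eu)
  have hext : IsPath E u0 (p ++ [(eu, ev, ed)]) ev := hp.append (.cons he (.nil ev))
  obtain ⟨q, hq, hqlen, hqw⟩ :=
    shorten hnc S hsrc (p ++ [(eu, ev, ed)]).length _ u0 ev le_rfl hext
  have hle : sInf {w | ∃ u p, IsPath E u p ev ∧ p.length ≤ S.card ∧ pweight p = w} ≤ pweight q :=
    csInf_le (hbdd ev) ⟨u0, q, hq, hqlen, rfl⟩
  have hpw : pweight (p ++ [(eu, ev, ed)]) = pweight p + ed := by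
    simp [pweight_append, pweight]
  show sInf {w | ∃ u p, IsPath E u p ev ∧ p.length ≤ S.card ∧ pweight p = w} ≤
    sInf {w | ∃ u p, IsPath E u p eu ∧ p.length ≤ S.card ∧ pweight p = w} + ed
  rw [← hw]
  linarith

end PathLemmas
section UTVPI

variable {X : Type*}

lemma sum_single_pair (x y : X) (a b : ℤ) (v : X → ℚ) :
    ((Finsupp.single x a + Finsupp.single y b).sum fun i t => (t : ℚ) * v i)
      = a * v x + b * v y := by
  rw [Finsupp.sum_add_index' (by simp) (by intro i t1 t2; push_cast; ring),
    Finsupp.sum_single_index (by simp), Finsupp.sum_single_index (by simp)]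

lemma sub_pair_eq (x y : X) :
    (Finsupp.single x 1 - Finsupp.single y 1 : X →₀ ℤ)
      = Finsupp.single x 1 + Finsupp.single y (-1) := by
  rw [Finsupp.single_neg, sub_eq_add_neg]

lemma negadd_pair_eq (x y : X) :
    (-Finsupp.single x 1 - Finsupp.single y 1 : X →₀ ℤ)
      = Finsupp.single x (-1) + Finsupp.single y (-1) := by
  rw [Finsupp.single_neg, Finsupp.single_neg, sub_eq_add_neg]

lemma sum_sub_pair (x y : X) (v : X → ℚ) :
    ((Finsupp.single x 1 - Finsupp.single y 1 : X →₀ ℤ).sum fun i t => (t : ℚ) * v i)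
      = v x - v y := by
  rw [sub_pair_eq, sum_single_pair]; push_cast; ring

lemma sum_add_pair (x y : X) (v : X → ℚ) :
    ((Finsupp.single x 1 + Finsupp.single y 1 : X →₀ ℤ).sum fun i t => (t : ℚ) * v i)
      = v x + v y := by
  rw [sum_single_pair]; push_cast; ring

lemma sum_negadd_pair (x y : X) (v : X → ℚ) :
    ((-Finsupp.single x 1 - Finsupp.single y 1 : X →₀ ℤ).sum fun i t => (t : ℚ) * v i)
      = -v x - v y := by
  rw [negadd_pair_eq, sum_single_pair]; push_cast; ring

lemma sum_one (x : X) (v : X → ℚ) :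
    ((Finsupp.single x 1 : X →₀ ℤ).sum fun i t => (t : ℚ) * v i) = v x := by
  rw [Finsupp.sum_single_index (by simp)]; push_cast; ring

lemma sum_negone (x : X) (v : X → ℚ) :
    ((-Finsupp.single x 1 : X →₀ ℤ).sum fun i t => (t : ℚ) * v i) = -v x := by
  rw [← Finsupp.single_neg, Finsupp.sum_single_index (by simp)]; push_cast; ring

/-- The valuation of vertices induced by a rational assignment. -/
def VQ (v : X → ℚ) (u : Vtx X) : ℚ := if u.1 then v u.2 else -v u.2

lemma edge_ineq {φ : Set (UC X)} {v : X → ℚ} (hv : ∀ c ∈ φ, c.holdsQ v)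
    {e : Vtx X × Vtx X × ℤ} (he : e ∈ Gr φ) : VQ v e.2.1 ≤ VQ v e.1 + e.2.2 := by
  obtain ⟨c, hc, x, y, d, hcase⟩ := he
  have hcv := hv c hc
  rcases hcase with ⟨rfl, h | h⟩ | ⟨rfl, h | h⟩ | ⟨rfl, h | h⟩ | ⟨rfl, h⟩ | ⟨rfl, h⟩ <;>
      subst h <;> simp only [UC.holdsQ] at hcv
  · rw [sum_sub_pair] at hcv; simp only [VQ]; norm_num; linarith
  · rw [sum_sub_pair] at hcv; simp only [VQ]; norm_num; linarith
  · rw [sum_add_pair] at hcv; simp only [VQ]; norm_num; linarith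
  · rw [sum_add_pair] at hcv; simp only [VQ]; norm_num; linarith
  · rw [sum_negadd_pair] at hcv; simp only [VQ]; norm_num; linarith
  · rw [sum_negadd_pair] at hcv; simp only [VQ]; norm_num; linarith
  · rw [sum_one] at hcv; simp only [VQ]; norm_num; push_cast; linarith
  · rw [sum_negone] at hcv; simp only [VQ]; norm_num; push_cast; linarith

lemma path_ineq {φ : Set (UC X)} {v : X → ℚ} (hv : ∀ c ∈ φ, c.holdsQ v) :
    ∀ {p : List (Vtx X × Vtx X × ℤ)} {u w : Vtx X}, IsPath (Gr φ) u p w →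
      VQ v w ≤ VQ v u + (pweight p : ℚ) := by
  intro p u w hp
  induction hp with
  | nil => simp [pweight]
  | cons he hp ih =>
    have h1 := edge_ineq hv he
    rw [pweight_cons]
    push_cast
    simp only at h1
    linarith

lemma cedges_nonloop {c : UC X} {e : Vtx X × Vtx X × ℤ} (he : e ∈ cedges c)
    (hne : e.1 ≠ e.2.1) :
    e.1.2 ∈ c.f.support ∧ e.2.1.2 ∈ c.f.support ∧
      (e.2.2 = c.bound ∨ e.2.2 = 2 * c.bound) := by
  classical
  obtain ⟨x, y, d, h⟩ := he
  rcases h with ⟨rfl, h | h⟩ | ⟨rfl, h | h⟩ | ⟨rfl, h | h⟩ | ⟨rfl, h⟩ | ⟨rfl, h⟩ <;> subst h <;>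
    refine ⟨?_, ?_, by simp⟩ <;>
    simp only [Finsupp.mem_support_iff, Finsupp.sub_apply, Finsupp.add_apply,
      Finsupp.neg_apply, Finsupp.single_apply] <;>
    [skip; skip; skip; skip; skip; skip; skip; skip; skip; skip; skip; skip;
     skip; skip; skip; skip] <;>
    first
    | (simp_all; done)
    | (have hxy : x ≠ y := by rintro rfl; exact hne rfl
       simp [hxy, hxy.symm]; done)
    | (split_ifs <;> omega)

lemma E0_finite {φ : Set (UC X)} (hfin : φ.Finite) :
    {e ∈ Gr φ | e.1 ≠ e.2.1}.Finite := by
  classical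
  have hsub : {e ∈ Gr φ | e.1 ≠ e.2.1} ⊆
      ⋃ c ∈ φ, ((Set.univ : Set Bool) ×ˢ (c.f.support : Set X)) ×ˢ
        (((Set.univ : Set Bool) ×ˢ (c.f.support : Set X)) ×ˢ
          ({c.bound, 2 * c.bound} : Set ℤ)) := by
    rintro ⟨u, w, d⟩ ⟨⟨c, hc, he⟩, hne⟩
    obtain ⟨h1, h2, h3⟩ := cedges_nonloop he hne
    refine Set.mem_biUnion hc ?_
    exact ⟨⟨trivial, h1⟩, ⟨trivial, h2⟩, by simpa using h3⟩
  refine Set.Finite.subset (hfin.biUnion fun c _ => ?_) hsub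
  exact (Set.finite_univ.prod (c.f.support.finite_toSet)).prod
    ((Set.finite_univ.prod (c.f.support.finite_toSet)).prod
      ((Set.finite_singleton _).insert _))

end UTVPI
/-- A (finite) set `φ` of UTVPI constraints is unsatisfiable in ℚ
iff its constraint graph `G_φ` contains a negative weight cycle. -/
theorem utvpi_unsatQ_iff_negative_cycle {X : Type*}
    (φ : Set (UC X)) (hwf : ∀ c ∈ φ, c.IsUTVPI) (hfin : φ.Finite) :
    ¬ SatQ φ ↔
      ∃ (u : Vtx X) (p : List (Vtx X × Vtx X × ℤ)),
        IsPath (Gr φ) u p u ∧ pweight p < 0 := by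
  classical
  constructor
  · intro hunsat
    by_contra hno
    apply hunsat
    push_neg at hno
    have hnc : NoNegCycle (Gr φ) := fun u p hp => hno u p hp
    have hnc0 : NoNegCycle {e ∈ Gr φ | e.1 ≠ e.2.1} :=
      fun u p hp => hnc u p (hp.mono fun e he => he.1)
    obtain ⟨π, hπ⟩ := exists_potential _ (E0_finite hfin) hnc0
    have hpot : ∀ e ∈ Gr φ, π e.2.1 ≤ π e.1 + e.2.2 := by
      intro e he
      by_cases hloop : e.1 = e.2.1
      · obtain ⟨e1, e2, ed⟩ := e
        have hloop' : e1 = e2 := hloop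
        subst hloop'
        have hcyc : IsPath (Gr φ) e1 [(e1, e1, ed)] e1 := .cons he (.nil _)
        have h0 := hnc _ _ hcyc
        simp only [pweight, List.map_cons, List.map_nil, List.sum_cons, List.sum_nil,
          add_zero] at h0
        simpa using h0
      · exact hπ e ⟨he, hloop⟩
    set v : X → ℚ := fun x => ((π (true, x) : ℚ) - (π (false, x) : ℚ)) / 2 with hvdef
    refine ⟨v, ?_⟩
    intro c hc
    obtain ⟨a, b, x, y, ha, hb, hf⟩ := hwf c hc
    obtain ⟨f, d⟩ := c
    have hf' : f = Finsupp.single x a + Finsupp.single y b := hf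
    subst hf'
    show ((Finsupp.single x a + Finsupp.single y b).sum fun i t => (t : ℚ) * v i) ≤ (d : ℚ)
    rw [sum_single_pair]
    have hvx : v x = ((π (true, x) : ℚ) - (π (false, x) : ℚ)) / 2 := rfl
    have hvy : v y = ((π (true, y) : ℚ) - (π (false, y) : ℚ)) / 2 := rfl
    rcases ha with rfl | rfl | rfl <;> rcases hb with rfl | rfl | rfl
    · -- a = -1, b = -1 : form -x - y ≤ d
      have hceq : (⟨Finsupp.single x (-1) + Finsupp.single y (-1), d⟩ : UC X)
          = ⟨-Finsupp.single x 1 - Finsupp.single y 1, d⟩ := by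
        rw [negadd_pair_eq]
      have h1 : π (false, x) ≤ π (true, y) + d :=
        hpot _ ⟨_, hc, x, y, d, Or.inr (Or.inr (Or.inl ⟨hceq, Or.inl rfl⟩))⟩
      have h2 : π (false, y) ≤ π (true, x) + d :=
        hpot _ ⟨_, hc, x, y, d, Or.inr (Or.inr (Or.inl ⟨hceq, Or.inr rfl⟩))⟩
      have h1' : (π (false, x) : ℚ) ≤ (π (true, y) : ℚ) + d := by exact_mod_cast h1
      have h2' : (π (false, y) : ℚ) ≤ (π (true, x) : ℚ) + d := by exact_mod_cast h2
      push_cast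
      rw [hvx, hvy]; linarith
    · -- a = -1, b = 0 : form -x ≤ d
      have hceq : (⟨Finsupp.single x (-1) + Finsupp.single y 0, d⟩ : UC X)
          = ⟨-Finsupp.single x 1, d⟩ := by
        rw [Finsupp.single_neg, Finsupp.single_zero, add_zero]
      have h1 : π (false, x) ≤ π (true, x) + 2 * d :=
        hpot _ ⟨_, hc, x, y, d, Or.inr (Or.inr (Or.inr (Or.inr ⟨hceq, rfl⟩)))⟩
      have h1' : (π (false, x) : ℚ) ≤ (π (true, x) : ℚ) + 2 * d := by exact_mod_cast h1
      push_cast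
      rw [hvx]; linarith
    · -- a = -1, b = 1 : form y - x ≤ d
      have hceq : (⟨Finsupp.single x (-1) + Finsupp.single y 1, d⟩ : UC X)
          = ⟨Finsupp.single y 1 - Finsupp.single x 1, d⟩ := by
        rw [sub_pair_eq, add_comm]
      have h1 : π (true, y) ≤ π (true, x) + d :=
        hpot _ ⟨_, hc, y, x, d, Or.inl ⟨hceq, Or.inl rfl⟩⟩
      have h2 : π (false, x) ≤ π (false, y) + d :=
        hpot _ ⟨_, hc, y, x, d, Or.inl ⟨hceq, Or.inr rfl⟩⟩
      have h1' : (π (true, y) : ℚ) ≤ (π (true, x) : ℚ) + d := by exact_mod_cast h1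
      have h2' : (π (false, x) : ℚ) ≤ (π (false, y) : ℚ) + d := by exact_mod_cast h2
      push_cast
      rw [hvx, hvy]; linarith
    · -- a = 0, b = -1 : form -y ≤ d
      have hceq : (⟨Finsupp.single x 0 + Finsupp.single y (-1), d⟩ : UC X)
          = ⟨-Finsupp.single y 1, d⟩ := by
        rw [Finsupp.single_neg, Finsupp.single_zero, zero_add]
      have h1 : π (false, y) ≤ π (true, y) + 2 * d :=
        hpot _ ⟨_, hc, y, x, d, Or.inr (Or.inr (Or.inr (Or.inr ⟨hceq, rfl⟩)))⟩
      have h1' : (π (false, y) : ℚ) ≤ (π (true, y) : ℚ) + 2 * d := by exact_mod_cast h1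
      push_cast
      rw [hvy]; linarith
    · -- a = 0, b = 0 : trivial constraint 0 ≤ d
      have hceq : (⟨Finsupp.single x 0 + Finsupp.single y 0, d⟩ : UC X)
          = ⟨Finsupp.single x 1 - Finsupp.single x 1, d⟩ := by
        rw [Finsupp.single_zero, Finsupp.single_zero, sub_self, add_zero]
      have h1 : π (true, x) ≤ π (true, x) + d :=
        hpot _ ⟨_, hc, x, x, d, Or.inl ⟨hceq, Or.inl rfl⟩⟩
      have h1' : (0 : ℚ) ≤ d := by exact_mod_cast le_of_add_le_add_left (a := π (true, x)) (by simpa using h1)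
      push_cast
      linarith
    · -- a = 0, b = 1 : form y ≤ d
      have hceq : (⟨Finsupp.single x 0 + Finsupp.single y 1, d⟩ : UC X)
          = ⟨Finsupp.single y 1, d⟩ := by
        rw [Finsupp.single_zero, zero_add]
      have h1 : π (true, y) ≤ π (false, y) + 2 * d :=
        hpot _ ⟨_, hc, y, x, d, Or.inr (Or.inr (Or.inr (Or.inl ⟨hceq, rfl⟩)))⟩
      have h1' : (π (true, y) : ℚ) ≤ (π (false, y) : ℚ) + 2 * d := by exact_mod_cast h1
      push_cast
      rw [hvy]; linarith
    · -- a = 1, b = -1 : form x - y ≤ d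
      have hceq : (⟨Finsupp.single x 1 + Finsupp.single y (-1), d⟩ : UC X)
          = ⟨Finsupp.single x 1 - Finsupp.single y 1, d⟩ := by
        rw [sub_pair_eq]
      have h1 : π (true, x) ≤ π (true, y) + d :=
        hpot _ ⟨_, hc, x, y, d, Or.inl ⟨hceq, Or.inl rfl⟩⟩
      have h2 : π (false, y) ≤ π (false, x) + d :=
        hpot _ ⟨_, hc, x, y, d, Or.inl ⟨hceq, Or.inr rfl⟩⟩
      have h1' : (π (true, x) : ℚ) ≤ (π (true, y) : ℚ) + d := by exact_mod_cast h1
      have h2' : (π (false, y) : ℚ) ≤ (π (false, x) : ℚ) + d := by exact_mod_cast h2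
      push_cast
      rw [hvx, hvy]; linarith
    · -- a = 1, b = 0 : form x ≤ d
      have hceq : (⟨Finsupp.single x 1 + Finsupp.single y 0, d⟩ : UC X)
          = ⟨Finsupp.single x 1, d⟩ := by
        rw [Finsupp.single_zero, add_zero]
      have h1 : π (true, x) ≤ π (false, x) + 2 * d :=
        hpot _ ⟨_, hc, x, y, d, Or.inr (Or.inr (Or.inr (Or.inl ⟨hceq, rfl⟩)))⟩
      have h1' : (π (true, x) : ℚ) ≤ (π (false, x) : ℚ) + 2 * d := by exact_mod_cast h1
      push_cast
      rw [hvx]; linarith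
    · -- a = 1, b = 1 : form x + y ≤ d
      have hceq : (⟨Finsupp.single x 1 + Finsupp.single y 1, d⟩ : UC X)
          = ⟨Finsupp.single x 1 + Finsupp.single y 1, d⟩ := rfl
      have h1 : π (true, x) ≤ π (false, y) + d :=
        hpot _ ⟨_, hc, x, y, d, Or.inr (Or.inl ⟨hceq, Or.inl rfl⟩)⟩
      have h2 : π (true, y) ≤ π (false, x) + d :=
        hpot _ ⟨_, hc, x, y, d, Or.inr (Or.inl ⟨hceq, Or.inr rfl⟩)⟩
      have h1' : (π (true, x) : ℚ) ≤ (π (false, y) : ℚ) + d := by exact_mod_cast h1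
      have h2' : (π (true, y) : ℚ) ≤ (π (false, x) : ℚ) + d := by exact_mod_cast h2
      push_cast
      rw [hvx, hvy]; linarith
  · rintro ⟨u, p, hp, hneg⟩ ⟨v, hv⟩
    have h1 := path_ineq hv hp
    have h2 : (pweight p : ℚ) < 0 := by exact_mod_cast hneg
    linarith

end UTVPIPaper
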